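/- (Theorem 1) Let T be a real 3×3 matrix, regarded as a unital qubit dynamical map on Bloch vectors. Then the following are equivalent: (i) [GBLP non-Markovianity witness] there exist p ∈ [0,1] with q = 1-p and vectors r₁, r₂ ∈ ℝ³ with ‖r₁‖ ≤ 1, ‖r₂‖ ≤ 1 such that max(‖T(p r₁ - q r₂)‖, |p-q|) > max(‖p r₁ - q r₂‖, |p-q|); (ii) [BLP non-Markovianity witness] there exist vectors s₁, s₂ ∈ ℝ³ with ‖s₁‖ ≤ 1, ‖s₂‖ ≤ 1 such that ‖T(s₁ - s₂)‖ > ‖s₁ - s₂‖. -/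

import Mathlib

noncomputable section

/-- The action of a (unital) qubit dynamical map, given by a real 3×3 matrix,
on Bloch vectors in ℝ³. -/
def act (T : Matrix (Fin 3) (Fin 3) ℝ) (r : EuclideanSpace ℝ (Fin 3)) :
    EuclideanSpace ℝ (Fin 3) :=
  WithLp.toLp 2 (T.mulVec r)

lemma act_smul (T : Matrix (Fin 3) (Fin 3) ℝ) (a : ℝ) (r : EuclideanSpace ℝ (Fin 3)) :
    act T (a • r) = a • act T r := by
  show WithLp.toLp 2 (T.mulVec (a • (r : Fin 3 → ℝ))) = a • WithLp.toLp 2 (T.mulVec r)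
  rw [T.mulVec_smul a, WithLp.toLp_smul]

/-- (Theorem 1) For a unital qubit dynamical map T, the GBLP non-Markovianity witness
(the generalized trace distance increases for some bias p and some pair of Bloch
vectors) is equivalent to the BLP non-Markovianity witness (the trace distance
increases for some pair of Bloch vectors). -/
theorem gblp_iff_blp_for_unital (T : Matrix (Fin 3) (Fin 3) ℝ) :
    (∃ (p : ℝ), p ∈ Set.Icc (0 : ℝ) 1 ∧ ∃ (q : ℝ), q = 1 - p ∧
      ∃ (r₁ r₂ : EuclideanSpace ℝ (Fin 3)), ‖r₁‖ ≤ 1 ∧ ‖r₂‖ ≤ 1 ∧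
        max ‖act T (p • r₁ - q • r₂)‖ |p - q| > max ‖p • r₁ - q • r₂‖ |p - q|)
    ↔ (∃ (s₁ s₂ : EuclideanSpace ℝ (Fin 3)), ‖s₁‖ ≤ 1 ∧ ‖s₂‖ ≤ 1 ∧
        ‖act T (s₁ - s₂)‖ > ‖s₁ - s₂‖) := by
  constructor
  · rintro ⟨p, ⟨hp0, hp1⟩, q, hq, r₁, r₂, h1, h2, h⟩
    refine ⟨p • r₁, q • r₂, ?_, ?_, ?_⟩
    · rw [norm_smul]
      have : ‖p‖ = p := abs_of_nonneg hp0
      nlinarith [norm_nonneg r₁]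
    · rw [norm_smul]
      have : ‖q‖ = q := abs_of_nonneg (by linarith)
      nlinarith [norm_nonneg r₂]
    · by_contra hc
      push_neg at hc
      exact absurd h (not_lt.2 (max_le_max hc le_rfl))
  · rintro ⟨s₁, s₂, h1, h2, h⟩
    refine ⟨1/2, ⟨by norm_num, by norm_num⟩, 1/2, by norm_num, s₁, s₂, h1, h2, ?_⟩
    have hd : (1/2 : ℝ) • s₁ - (1/2 : ℝ) • s₂ = (1/2 : ℝ) • (s₁ - s₂) := by
      rw [smul_sub]
    rw [hd, act_smul]
    simp only [sub_self, abs_zero, norm_smul]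
    rw [max_eq_left (by positivity), max_eq_left (by positivity)]
    have : (0:ℝ) < ‖(1/2 : ℝ)‖ := by norm_num
    exact mul_lt_mul_of_pos_left h this
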